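/- For every uncountable regular cardinal κ there exists an infinite 𝓒-independent family on κ, where 𝓒 is the club filter: a countably infinite family 𝓘 ⊆ 𝒫(κ) such that every finite Boolean combination of 𝓘 is stationary in κ. -/

import Mathlib

open Cardinal

/-- `C` is a club (closed unbounded) subset of the ordinal `o`. -/
def IsClubIn (C : Set Ordinal) (o : Ordinal) : Prop :=
  C ⊆ Set.Iio o ∧ (∀ a < o, ∃ b ∈ C, a ≤ b) ∧
    (∀ a < o, a ≠ 0 → (∀ b < a, ∃ c ∈ C, b < c ∧ c < a) → a ∈ C)

/-- `S` is a stationary subset of the ordinal `o`: it meets every club in `o`. -/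
def IsStationaryIn (S : Set Ordinal) (o : Ordinal) : Prop :=
  S ⊆ Set.Iio o ∧ ∀ C, IsClubIn C o → (S ∩ C).Nonempty

namespace ClubIndep

lemma lt_add_one' (x : Ordinal) : x < x + 1 := by
  rw [Ordinal.add_one_eq_succ]; exact Order.lt_succ x

open Classical in
noncomputable def nextIn (C : Set Ordinal) (x : Ordinal) : Ordinal :=
  if h : ∃ c ∈ C, x < c then h.choose else 0

lemma nextIn_spec {C : Set Ordinal} {o x : Ordinal} (hC : IsClubIn C o) (ho : Order.IsSuccLimit o)
    (hx : x < o) : nextIn C x ∈ C ∧ x < nextIn C x := by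
  have h : ∃ c ∈ C, x < c := by
    obtain ⟨b, hb, hxb⟩ := hC.2.1 (x + 1) (by simpa [← Ordinal.add_one_eq_succ] using ho.succ_lt hx)
    exact ⟨b, hb, lt_of_lt_of_le (lt_add_one' x) hxb⟩
  classical
  rw [nextIn]
  rw [dif_pos h]
  exact ⟨h.choose_spec.1, h.choose_spec.2⟩

lemma isStationaryIn_mono {S S' : Set Ordinal} {o} (h : IsStationaryIn S o) (hsub : S ⊆ S')
    (hsub' : S' ⊆ Set.Iio o) : IsStationaryIn S' o :=
  ⟨hsub', fun C hC => ((h.2 C hC).imp fun _ hx => ⟨hsub hx.1, hx.2⟩)⟩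

universe u

lemma cof_le_of_cofinal {ι : Type u} {o : Ordinal.{u}} (b : ι → Ordinal.{u}) (hb : ∀ i, b i < o)
    (hcof : ∀ x < o, ∃ i, x ≤ b i) : o.cof ≤ #ι := by
  have h1 : Ordinal.lsub b = o := by
    refine le_antisymm (Ordinal.lsub_le hb) (le_of_forall_lt fun x hx => ?_)
    obtain ⟨i, hi⟩ := hcof x hx
    exact lt_of_le_of_lt hi (Ordinal.lt_lsub b i)
  exact h1 ▸ Ordinal.cof_lsub_le b

lemma cof_blsub_ge {δ : Ordinal.{u}} (f : ∀ b < δ, Ordinal.{u})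
    (hmono : ∀ {i j} (hi : i < δ) (hj : j < δ), i < j → f i hi < f j hj) :
    δ.cof ≤ (Ordinal.blsub δ f).cof := by
  obtain ⟨ι, g, hg, hcard⟩ := Ordinal.exists_lsub_cof (Ordinal.blsub.{u, u} δ f)
  have H : ∀ i : ι, ∃ j, ∃ hj : j < δ, g i ≤ f j hj := by
    intro i
    have := Ordinal.lt_lsub g i
    rw [hg] at this
    exact Ordinal.lt_blsub_iff.1 this
  choose bfun hjlt hle using H
  rw [← hcard]
  refine cof_le_of_cofinal bfun hjlt fun x hx => ?_
  have : f x hx < Ordinal.lsub g := by rw [hg]; exact Ordinal.lt_blsub f x hx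
  obtain ⟨i, hi⟩ := Ordinal.lt_lsub_iff.1 this
  refine ⟨i, ?_⟩
  by_contra hlt
  push_neg at hlt
  exact absurd (hi.trans (hle i)) (not_le.2 (hmono _ _ hlt))

noncomputable def iterSup (g : Ordinal.{u} → Ordinal.{u}) : Ordinal.{u} → Ordinal.{u}
  | i => g (Ordinal.bsup.{u, u} i fun j _hj => iterSup g j)
termination_by i => i
decreasing_by exact _hj

lemma iterSup_eq (g : Ordinal.{u} → Ordinal.{u}) (i : Ordinal.{u}) :
    iterSup g i = g (Ordinal.bsup.{u, u} i fun j _ => iterSup g j) := by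
  rw [iterSup]

lemma stationary_cof (o : Ordinal.{u}) (ho : Order.IsSuccLimit o) (lam : Cardinal.{u})
    (hreg : lam.IsRegular) (hlt : lam < o.cof) :
    IsStationaryIn {α | α < o ∧ α.cof = lam} o := by
  refine ⟨fun α hα => hα.1, fun C hC => ?_⟩
  set f : Ordinal.{u} → Ordinal.{u} := iterSup (nextIn C) with hf
  have hcardlt : ∀ i : Ordinal.{u}, i ≤ lam.ord → i.card < o.cof := fun i hi =>
    lt_of_le_of_lt (by simpa [Cardinal.card_ord] using Ordinal.card_le_card hi) hlt
  have key : ∀ i, i ≤ lam.ord → f i ∈ C ∧ f i < o := by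
    intro i
    induction i using Ordinal.induction with
    | h i IH =>
      intro hi
      have hsup : Ordinal.bsup.{u, u} i (fun j _ => f j) < o :=
        Ordinal.bsup_lt_ord (hcardlt i hi) fun j hj => (IH j hj ((le_of_lt hj).trans hi)).2
      have := nextIn_spec hC ho hsup
      rw [hf, iterSup_eq]
      exact ⟨this.1, hC.1 this.1⟩
  have hmono : ∀ {i j : Ordinal}, i < j → j ≤ lam.ord → f i < f j := by
    intro i j hij hj
    have h1 : f i ≤ Ordinal.bsup.{u, u} j (fun k _ => f k) := Ordinal.le_bsup _ i hij
    have h2 : Ordinal.bsup.{u, u} j (fun k _ => f k) < f j := by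
      have hsup : Ordinal.bsup.{u, u} j (fun k _ => f k) < o :=
        Ordinal.bsup_lt_ord (hcardlt j hj) fun k hk => (key k ((le_of_lt hk).trans hj)).2
      have := nextIn_spec hC ho hsup
      rw [hf, iterSup_eq]
      exact this.2
    exact lt_of_le_of_lt h1 h2
  have hordlim : Order.IsSuccLimit lam.ord := Cardinal.isSuccLimit_ord hreg.1
  set a := Ordinal.blsub.{u, u} lam.ord (fun j _ => f j) with ha
  have halt : a < o := Ordinal.blsub_lt_ord (by simpa [Cardinal.card_ord] using hlt)
    fun j hj => (key j (le_of_lt hj)).2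
  have hane : a ≠ 0 := by
    have : f 0 < a := Ordinal.lt_blsub _ 0 (hordlim.pos)
    exact (lt_of_le_of_lt zero_le this).ne'
  have haC : a ∈ C := by
    refine hC.2.2 a halt hane fun d hd => ?_
    obtain ⟨j, hj, hdj⟩ := Ordinal.lt_blsub_iff.1 (ha ▸ hd)
    have hj1 : j + 1 < lam.ord := by
      simpa [← Ordinal.add_one_eq_succ] using hordlim.succ_lt hj
    exact ⟨f (j + 1), (key (j + 1) hj1.le).1,
      lt_of_le_of_lt hdj (hmono (lt_add_one' j) hj1.le), Ordinal.lt_blsub _ _ hj1⟩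
  have hcof : a.cof = lam := by
    apply le_antisymm
    · have := Ordinal.cof_blsub_le.{u} (fun (j : Ordinal) (_ : j < lam.ord) => f j)
      rw [← ha] at this
      simpa [Cardinal.card_ord] using this
    · have := cof_blsub_ge (fun (j : Ordinal) (_ : j < lam.ord) => f j)
        (fun hi hj hij => hmono hij hj.le)
      rw [← ha, hreg.cof_eq] at this
      exact this
  exact ⟨a, ⟨halt, hcof⟩, haC⟩


lemma isClubIn_inter (o : Ordinal) (ho : Order.IsSuccLimit o) (hcof : ℵ₀ < o.cof)
    (β : Ordinal) (hβ : β < o) (μ : Ordinal) (hμ : μ.card < o.cof)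
    (C : Ordinal → Set Ordinal) (hC : ∀ ξ < μ, IsClubIn (C ξ) o) :
    IsClubIn {γ | β < γ ∧ γ < o ∧ ∀ ξ < μ, γ ∈ C ξ} o := by
  refine ⟨fun γ hγ => hγ.2.1, ?_, ?_⟩
  · -- unbounded
    intro a ha
    set g : ℕ → Ordinal := fun n => Nat.rec (max a β + 1)
      (fun _ x => max (Ordinal.bsup μ (fun ξ _ => nextIn (C ξ) x)) x + 1) n with hg
    have hglt : ∀ n, g n < o := by
      intro n
      induction n with
      | zero => simpa [← Ordinal.add_one_eq_succ, hg] using ho.succ_lt (max_lt ha hβ)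
      | succ n ih =>
        have hb : Ordinal.bsup μ (fun ξ _ => nextIn (C ξ) (g n)) < o := by
          refine Ordinal.bsup_lt_ord hμ (fun ξ hξ => ?_)
          exact (hC ξ hξ).1 (nextIn_spec (hC ξ hξ) ho ih).1
        have : max (Ordinal.bsup μ (fun ξ _ => nextIn (C ξ) (g n))) (g n) < o := max_lt hb ih
        simpa [← Ordinal.add_one_eq_succ, hg] using ho.succ_lt this
    have hgmono : ∀ n, g n < g (n + 1) := by
      intro n
      have : g n ≤ max (Ordinal.bsup μ (fun ξ _ => nextIn (C ξ) (g n))) (g n) := le_max_right _ _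
      exact lt_of_le_of_lt this (lt_add_one' _)
    set b := ⨆ n, g n with hbdef
    have hgle : ∀ n, g n ≤ b := fun n => Ordinal.le_iSup g n
    have hblt : b < o := by
      refine Ordinal.iSup_lt_ord_lift (f := g) ?_ hglt
      simpa using hcof
    have hg0 : g 0 = max a β + 1 := rfl
    have hgs : ∀ n, g (n+1) = max (Ordinal.bsup μ (fun ξ _ => nextIn (C ξ) (g n))) (g n) + 1 :=
      fun n => rfl
    refine ⟨b, ⟨?_, hblt, ?_⟩, ?_⟩
    · calc β ≤ max a β := le_max_right a β
        _ < g 0 := by rw [hg0]; exact lt_add_one' _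
        _ ≤ b := hgle 0
    · intro ξ hξ
      have hb0 : (0 : Ordinal) < b := by
        refine lt_of_lt_of_le ?_ (hgle 0)
        rw [hg0]
        exact lt_of_le_of_lt zero_le (lt_add_one' _)
      refine (hC ξ hξ).2.2 b hblt hb0.ne' (fun d hd => ?_)
      obtain ⟨n, hdn⟩ := (Ordinal.lt_iSup_iff (f := g)).1 hd
      refine ⟨nextIn (C ξ) (g n), (nextIn_spec (hC ξ hξ) ho (hglt n)).1,
        lt_trans hdn (nextIn_spec (hC ξ hξ) ho (hglt n)).2, ?_⟩
      calc nextIn (C ξ) (g n) ≤ Ordinal.bsup μ (fun ξ' _ => nextIn (C ξ') (g n)) :=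
            Ordinal.le_bsup _ ξ hξ
        _ ≤ max (Ordinal.bsup μ (fun ξ' _ => nextIn (C ξ') (g n))) (g n) := le_max_left _ _
        _ < g (n+1) := by rw [hgs n]; exact lt_add_one' _
        _ ≤ b := hgle (n+1)
    · refine le_of_lt ?_
      calc a ≤ max a β := le_max_left a β
        _ < g 0 := by rw [hg0]; exact lt_add_one' _
        _ ≤ b := (hgle 0)
  · -- closed
    intro a ha hne h
    have h0 : (0 : Ordinal) < a := pos_iff_ne_zero.2 hne
    obtain ⟨c, hc, _, hca⟩ := h 0 h0
    refine ⟨lt_of_lt_of_le hc.1 hca.le, ha, fun ξ hξ => ?_⟩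
    exact (hC ξ hξ).2.2 a ha hne (fun b hb => by
      obtain ⟨c, hc, hbc, hca⟩ := h b hb
      exact ⟨c, hc.2.2 ξ hξ, hbc, hca⟩)


theorem exists_disjoint_stationary (κ : Cardinal.{0}) (hreg : κ.IsRegular) (hu : ℵ₀ < κ) :
    ∃ T : ℕ → Set Ordinal.{0}, (∀ n, IsStationaryIn (T n) κ.ord) ∧
      ∀ m n : ℕ, m ≠ n → Disjoint (T m) (T n) := by
  set o := κ.ord with hodef
  have hcof : o.cof = κ := hreg.cof_eq
  have ho : Order.IsSuccLimit o := Cardinal.isSuccLimit_ord hu.le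
  by_cases hsucc : ∃ μ : Cardinal.{0}, κ = Order.succ μ
  · -- Ulam matrix case
    obtain ⟨μ, hμκ⟩ := hsucc
    have hμlt : μ < κ := hμκ ▸ Order.lt_succ μ
    have hμinf : ℵ₀ ≤ μ := by
      have := hu
      rw [hμκ, Order.lt_succ_iff] at this
      exact this
    -- injections
    have hinj : ∀ α : Ordinal.{0}, ∃ f : Ordinal.{0} → Ordinal.{0}, α < o →
        (∀ β < α, f β < μ.ord) ∧ (∀ β β', β < α → β' < α → f β = f β' → β = β') := by
      intro α
      by_cases hα : α < o
      · have hcard : #(Set.Iio α) ≤ #(Set.Iio μ.ord) := by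
          rw [Ordinal.mk_Iio_ordinal, Ordinal.mk_Iio_ordinal, Cardinal.lift_le, Cardinal.card_ord]
          have : α.card < κ := Cardinal.lt_ord.1 hα
          rw [hμκ, Order.lt_succ_iff] at this
          exact this
        obtain ⟨e⟩ := (Cardinal.le_def _ _).1 hcard
        classical
        refine ⟨fun β => if hβ : β < α then (e ⟨β, hβ⟩).1 else 0, fun _ => ⟨?_, ?_⟩⟩
        · intro β hβ
          simp only [dif_pos hβ]
          exact (e ⟨β, hβ⟩).2
        · intro β β' hβ hβ' heq
          simp only [dif_pos hβ, dif_pos hβ'] at heq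
          have := e.injective (Subtype.ext heq)
          exact congrArg Subtype.val this
      · exact ⟨fun _ => 0, fun h => absurd h hα⟩
    choose F hF using hinj
    set A : Ordinal → Ordinal → Set Ordinal.{0} :=
      fun ξ β => {α | α < o ∧ β < α ∧ F α β = ξ} with hA
    -- each column has a stationary entry
    have hcol : ∀ β : Ordinal, β < o → ∃ ξ, ξ < μ.ord ∧ IsStationaryIn (A ξ β) o := by
      intro β hβ
      by_contra hcon
      push_neg at hcon
      have hclub : ∀ ξ : Ordinal, ∃ Cξ : Set Ordinal, ξ < μ.ord →
          IsClubIn Cξ o ∧ A ξ β ∩ Cξ = ∅ := by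
        intro ξ
        by_cases hξ : ξ < μ.ord
        · have hns := hcon ξ hξ
          rw [IsStationaryIn] at hns
          push_neg at hns
          obtain ⟨Cξ, hCξ, hempty⟩ := hns (fun α hα => hα.1)
          exact ⟨Cξ, fun _ => ⟨hCξ, hempty⟩⟩
        · exact ⟨Set.Iio o, fun h => absurd h hξ⟩
      choose Cc hCc using hclub
      have hD : IsClubIn {γ | β < γ ∧ γ < o ∧ ∀ ξ < μ.ord, γ ∈ Cc ξ} o := by
        refine isClubIn_inter o ho (hcof ▸ hu) β hβ μ.ord ?_ Cc (fun ξ hξ => (hCc ξ hξ).1)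
        rw [Cardinal.card_ord, hcof]
        exact hμlt
      obtain ⟨γ, hγ, _⟩ := hD.2.1 0 ho.pos
      have hγo : γ < o := hγ.2.1
      have hξ0 : F γ β < μ.ord := (hF γ hγo).1 β hγ.1
      have : γ ∈ A (F γ β) β := ⟨hγo, hγ.1, rfl⟩
      have := Set.mem_inter this (hγ.2.2 (F γ β) hξ0)
      rw [(hCc (F γ β) hξ0).2] at this
      exact this
    -- choice over the subtype
    have hcol' : ∀ β : Set.Iio o, ∃ ξ : Set.Iio μ.ord, IsStationaryIn (A ξ.1 β.1) o := by
      intro β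
      obtain ⟨ξ, hξ, hstat⟩ := hcol β.1 β.2
      exact ⟨⟨ξ, hξ⟩, hstat⟩
    choose G hG using hcol'
    -- pigeonhole
    have hcards : #(Set.Iio μ.ord) < #(Set.Iio o) := by
      rw [Ordinal.mk_Iio_ordinal, Ordinal.mk_Iio_ordinal, Cardinal.lift_lt,
        Cardinal.card_ord, Cardinal.card_ord]
      exact hμlt
    have hinf : Infinite (Set.Iio μ.ord) := by
      rw [Cardinal.infinite_iff, Ordinal.mk_Iio_ordinal, Cardinal.card_ord]
      simpa using hμinf
    obtain ⟨ξs, hfib⟩ := @Cardinal.exists_infinite_fiber' _ _ G hcards hinf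
    have : Infinite (G ⁻¹' {ξs} : Set (Set.Iio o)) := hfib
    let emb : ℕ ↪ (G ⁻¹' {ξs} : Set (Set.Iio o)) := Infinite.natEmbedding _
    refine ⟨fun n => A ξs.1 ((emb n).1).1, fun n => ?_, fun m n hmn => ?_⟩
    · have hGfix : G (emb n).1 = ξs := (emb n).2
      have := hG (emb n).1
      rwa [hGfix] at this
    · rw [Set.disjoint_left]
      rintro α ⟨hαo, hβα, hFα⟩ ⟨_, hβ'α, hFα'⟩
      have heq : ((emb m).1).1 = ((emb n).1).1 :=
        (hF α hαo).2 _ _ hβα hβ'α (hFα.trans hFα'.symm)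
      exact hmn (emb.injective (Subtype.ext (Subtype.ext heq)))
  · -- limit cardinal case: cofinality classes
    push_neg at hsucc
    have haleph : ∀ n : ℕ, (ℵ_ n).IsRegular ∧ ℵ_ n < κ := by
      intro n
      induction n with
      | zero => simpa using ⟨Cardinal.isRegular_aleph0, hu⟩
      | succ n ih =>
        have hcast : ((n + 1 : ℕ) : Ordinal) = Order.succ (n : Ordinal) := by
          rw [Nat.cast_succ, Ordinal.add_one_eq_succ]
        constructor
        · rw [hcast]
          exact Cardinal.isRegular_aleph_succ _
        · rw [hcast, Cardinal.aleph_succ]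
          refine lt_of_le_of_ne (Order.succ_le_of_lt ih.2) fun h => hsucc _ h.symm
    refine ⟨fun n => {α | α < o ∧ α.cof = ℵ_ n}, fun n => ?_, fun m n hmn => ?_⟩
    · exact stationary_cof o ho (ℵ_ n) (haleph n).1 (hcof ▸ (haleph n).2)
    · rw [Set.disjoint_left]
      rintro α ⟨_, hm⟩ ⟨_, hn⟩
      have : (ℵ_ (m : Ordinal)) = ℵ_ (n : Ordinal) := hm.symm.trans hn
      have h2 : (m : Ordinal) ≤ (n : Ordinal) := Cardinal.aleph_le_aleph.1 this.le
      have h3 : (n : Ordinal) ≤ (m : Ordinal) := Cardinal.aleph_le_aleph.1 this.ge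
      exact hmn (by exact_mod_cast le_antisymm h2 h3)


lemma isClubIn_Iio (o : Ordinal) : IsClubIn (Set.Iio o) o :=
  ⟨subset_rfl, fun a ha => ⟨a, ha, le_rfl⟩, fun a ha _ _ => ha⟩

lemma stationary_nonempty {S : Set Ordinal} {o} (h : IsStationaryIn S o) : S.Nonempty := by
  obtain ⟨x, hx, _⟩ := h.2 (Set.Iio o) (isClubIn_Iio o)
  exact ⟨x, hx⟩

end ClubIndep

open ClubIndep

/-- on every uncountable regular `κ` there is an infinite (countable)
`𝓒`-independent family: every finite Boolean combination is stationary in `κ`. -/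
theorem exists_infinite_club_independent (κ : Cardinal.{0})
    (hreg : κ.IsRegular) (hu : ℵ₀ < κ) :
    ∃ 𝓘 : Set (Set Ordinal.{0}), (∀ I ∈ 𝓘, I ⊆ Set.Iio κ.ord) ∧
      𝓘.Infinite ∧ 𝓘.Countable ∧
      ∀ S T : Finset (Set Ordinal.{0}), ↑S ⊆ 𝓘 → ↑T ⊆ 𝓘 → Disjoint S T →
        IsStationaryIn ((Set.Iio κ.ord ∩ ⋂ I ∈ S, I) \ ⋃ I ∈ T, I) κ.ord := by
  classical
  obtain ⟨T0, hT0stat, hT0disj⟩ := exists_disjoint_stationary κ hreg hu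
  set e : Finset ℕ ≃ ℕ := Denumerable.eqv (Finset ℕ) with he
  set T' : Finset ℕ → Set Ordinal.{0} := fun F => T0 (e F) with hT'
  have hT'stat : ∀ F, IsStationaryIn (T' F) κ.ord := fun F => hT0stat (e F)
  have hT'disj : ∀ F F' : Finset ℕ, F ≠ F' → Disjoint (T' F) (T' F') :=
    fun F F' h => hT0disj _ _ (fun hc => h (e.injective hc))
  set J : ℕ → Set Ordinal.{0} := fun n => ⋃ (F : Finset ℕ) (_ : n ∈ F), T' F with hJ
  have hT'subJ : ∀ (F : Finset ℕ) (n : ℕ), n ∈ F → T' F ⊆ J n := by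
    intro F n hn
    exact Set.subset_biUnion_of_mem (u := fun F => T' F) hn
  have hJsub : ∀ n, J n ⊆ Set.Iio κ.ord := by
    intro n
    refine Set.iUnion₂_subset fun F _ => (hT'stat F).1
  have hJmem : ∀ {x : Ordinal} {n : ℕ}, x ∈ J n → ∃ F : Finset ℕ, n ∈ F ∧ x ∈ T' F := by
    intro x n hx
    rw [hJ] at hx
    simpa [Set.mem_iUnion] using hx
  have hJinj : Function.Injective J := by
    intro a b hab
    by_contra hne
    obtain ⟨x, hx⟩ := stationary_nonempty (hT'stat {a})
    have hxa : x ∈ J a := hT'subJ {a} a (Finset.mem_singleton_self a) hx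
    rw [hab] at hxa
    obtain ⟨F, hbF, hxF⟩ := hJmem hxa
    have hFne : F ≠ {a} := by
      intro h
      rw [h, Finset.mem_singleton] at hbF
      exact hne hbF.symm
    exact Set.disjoint_left.1 (hT'disj F {a} hFne) hxF hx
  refine ⟨Set.range J, ?_, Set.infinite_range_of_injective hJinj, Set.countable_range J,
    ?_⟩
  · rintro I ⟨n, rfl⟩
    exact hJsub n
  · intro S T hS hT hd
    have hSfin : (J ⁻¹' ↑S).Finite := Set.Finite.preimage hJinj.injOn S.finite_toSet
    have hTfin : (J ⁻¹' ↑T).Finite := Set.Finite.preimage hJinj.injOn T.finite_toSet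
    set F0 : Finset ℕ := hSfin.toFinset with hF0
    have hmemF0 : ∀ n : ℕ, n ∈ F0 ↔ J n ∈ S := by
      intro n
      simp [hF0, Set.Finite.mem_toFinset]
    have hsub : T' F0 ⊆ (Set.Iio κ.ord ∩ ⋂ I ∈ S, I) \ ⋃ I ∈ T, I := by
      intro x hx
      refine ⟨⟨(hT'stat F0).1 hx, ?_⟩, ?_⟩
      · refine Set.mem_biInter fun I hI => ?_
        obtain ⟨n, rfl⟩ := hS hI
        exact hT'subJ F0 n ((hmemF0 n).2 hI) hx
      · intro hxT
        simp only [Set.mem_iUnion] at hxT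
        obtain ⟨I, hIT, hxI⟩ := hxT
        obtain ⟨m, rfl⟩ := hT hIT
        obtain ⟨F, hmF, hxF⟩ := hJmem hxI
        have hmF0 : m ∉ F0 := by
          rw [hmemF0]
          intro hJm
          exact Finset.disjoint_left.1 hd hJm hIT
        have : F ≠ F0 := fun h => hmF0 (h ▸ hmF)
        exact Set.disjoint_left.1 (hT'disj F F0 this) hxF hx
    refine isStationaryIn_mono (hT'stat F0) hsub ?_
    exact fun x hx => hx.1.1
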